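/- Let A → B → C be an exact triangle in a triangulated category with B = B₁ ⊕ B₂. If B₁ → C → C₀ is an exact triangle completing the composite B₁ → B → C, then there is an exact triangle A → B₂ → C₀. -/

import Mathlib

open CategoryTheory CategoryTheory.Limits CategoryTheory.Pretriangulated

/-- Let `A → B → C` be a distinguished (exact) triangle in a triangulated
category with `B = B₁ ⊞ B₂` a biproduct. If `B₁ → C → C₀` is a distinguished triangle
completing the composite `B₁ → B → C` (first map the biproduct inclusion), then there is a
distinguished triangle `A → B₂ → C₀`, where the map `A → B₂` is the composite of `f` with the
biproduct projection. (An application of the octahedral axiom.) -/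
theorem stmt1 {C : Type*} [Category C] [Preadditive C] [HasZeroObject C]
    [HasShift C ℤ] [∀ n : ℤ, (CategoryTheory.shiftFunctor C n).Additive]
    [Pretriangulated C] [IsTriangulated C] [HasBinaryBiproducts C]
    (A B₁ B₂ Cobj C₀ : C)
    (f : A ⟶ B₁ ⊞ B₂) (g : B₁ ⊞ B₂ ⟶ Cobj) (h : Cobj ⟶ A⟦(1 : ℤ)⟧)
    (hT : Triangle.mk f g h ∈ distTriang C)
    (j : Cobj ⟶ C₀) (δ : C₀ ⟶ B₁⟦(1 : ℤ)⟧)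
    (hT₀ : Triangle.mk (biprod.inl ≫ g) j δ ∈ distTriang C) :
    ∃ (v : B₂ ⟶ C₀) (w : C₀ ⟶ A⟦(1 : ℤ)⟧),
      Triangle.mk (f ≫ biprod.snd) v w ∈ distTriang C := by
  have h₁₂ : Triangle.mk (biprod.inl : B₁ ⟶ B₁ ⊞ B₂) biprod.snd 0 ∈ distTriang C :=
    binaryBiproductTriangle_distinguished B₁ B₂
  have h₂₃ : Triangle.mk g h (-f⟦(1 : ℤ)⟧') ∈ distTriang C := rot_of_distTriang _ hT
  obtain H := Triangulated.someOctahedron (u₁₂ := (biprod.inl : B₁ ⟶ B₁ ⊞ B₂))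
    (u₂₃ := g) rfl h₁₂ h₂₃ hT₀
  have hmem := inv_rot_of_distTriang _ H.mem
  refine ⟨H.m₁,
    (H.m₃ ≫ (shiftFunctorCompIsoId C (-1 : ℤ) 1 (by omega)).inv.app (A⟦(1 : ℤ)⟧)) ≫
      (shiftFunctor C (1 : ℤ)).map ((shiftFunctorCompIsoId C (1 : ℤ) (-1) (by omega)).hom.app A), ?_⟩
  refine isomorphic_distinguished _ hmem _ ?_
  refine Triangle.isoMk _ _ ((shiftFunctorCompIsoId C (1 : ℤ) (-1) (by omega)).symm.app A) (Iso.refl B₂) (Iso.refl C₀)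
    ?_ (by exact (Category.comp_id _).trans (Category.id_comp _).symm) ?_
  · show (f ≫ biprod.snd) ≫ 𝟙 B₂ = (shiftFunctorCompIsoId C (1 : ℤ) (-1) (by omega)).inv.app A ≫
      (-((shiftFunctor C (-1 : ℤ)).map ((-(f⟦(1 : ℤ)⟧')) ≫ (biprod.snd : B₁ ⊞ B₂ ⟶ B₂)⟦(1 : ℤ)⟧') ≫
        (shiftFunctorCompIsoId C (1 : ℤ) (-1) (by omega)).hom.app B₂))
    simp only [Functor.map_comp, Functor.map_neg, Preadditive.neg_comp, neg_neg,
      ← Functor.comp_map, Category.assoc, Category.comp_id]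
    rw [← Functor.map_comp_assoc, NatTrans.naturality, Iso.inv_hom_id_app_assoc, Functor.id_map]
  · show ((H.m₃ ≫ (shiftFunctorCompIsoId C (-1 : ℤ) 1 (by omega)).inv.app (A⟦(1 : ℤ)⟧)) ≫
      (shiftFunctor C (1 : ℤ)).map ((shiftFunctorCompIsoId C (1 : ℤ) (-1) (by omega)).hom.app A)) ≫
        (shiftFunctor C (1 : ℤ)).map ((shiftFunctorCompIsoId C (1 : ℤ) (-1) (by omega)).inv.app A) =
      𝟙 C₀ ≫ H.m₃ ≫ (shiftFunctorCompIsoId C (-1 : ℤ) 1 (by omega)).inv.app (A⟦(1 : ℤ)⟧)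
    rw [Category.assoc, ← Functor.map_comp, Iso.hom_inv_id_app]
    simp
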